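/- (Achievability of the controlled-energy-measurement bound.) Let U, S : ℝ → (d×d complex matrices) be families of unitary matrices differentiable at θ₀, with Hermitian local generators g[U] := i U′(θ₀)U(θ₀)† and g[S] := i S′(θ₀)S(θ₀)†. Suppose there exist unit eigenvectors v₁ of g[S] for its largest eigenvalue and v_d of g[S] for its smallest eigenvalue such that every entry of v₁ and the corresponding entry of v_d have equal complex modulus: |(v₁)_j| = |(v_d)_j| for all j = 1,…,d. Then there exist a unitary d×d matrix V and a unit vector ψ₀ ∈ ℂ^d such that, with Ũ(θ) := S(θ)VU(θ), ρ₀ := ψ₀ψ₀† and p_j(θ) := (Ũ(θ)ρ₀Ũ(θ)†)_{jj}, the Fisher information Σ_{j : p_j(θ₀) ≠ 0} (p_j′(θ₀))²/p_j(θ₀) equals [σ(g[U]) + σ(g[S])]². -/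

import Mathlib

open Matrix
open scoped ComplexOrder

/-- The spectral gap of a matrix: the difference between the largest and smallest eigenvalue
when the matrix is Hermitian (and `0` otherwise, by convention). -/
noncomputable def specGap {d : ℕ} [NeZero d] (M : Matrix (Fin d) (Fin d) ℂ) : ℝ :=
  if h : M.IsHermitian then
    Finset.univ.sup' Finset.univ_nonempty h.eigenvalues
      - Finset.univ.inf' Finset.univ_nonempty h.eigenvalues
  else 0

section Aux

lemma exists_unit_avoid (B : Finset ℂ) : ∃ c : ℂ, ‖c‖ = 1 ∧ c ∉ B := by
  have hinj : Function.Injective (fun n : ℕ => Complex.exp ((n : ℝ) * Complex.I)) := by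
    intro n m h
    simp only [Complex.exp_eq_exp_iff_exists_int] at h
    obtain ⟨k, hk⟩ := h
    have hk' : (n : ℝ) = (m : ℝ) + k * (2 * Real.pi) := by
      have := congrArg Complex.im hk
      push_cast at this ⊢
      simpa [Complex.mul_im, Complex.mul_re] using this
    by_cases hk0 : k = 0
    · subst hk0; simp at hk'; exact_mod_cast hk'
    · exfalso
      have : (Real.pi : ℝ) = ((n : ℝ) - m) / (2 * k) := by
        field_simp at hk' ⊢
        linarith
      refine irrational_pi ⟨((n : ℚ) - m) / (2 * k), ?_⟩
      rw [this]; push_cast; ring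
  obtain ⟨c, hc, hcB⟩ := (Set.infinite_range_of_injective hinj).exists_notMem_finset B
  obtain ⟨n, rfl⟩ := hc
  exact ⟨_, Complex.norm_exp_ofReal_mul_I _, hcB⟩

lemma exists_unitary_pair {d : ℕ} (hd : 2 ≤ d) (x₁ x₂ y₁ y₂ : Fin d → ℂ)
    (hx11 : star x₁ ⬝ᵥ x₁ = 1) (hx22 : star x₂ ⬝ᵥ x₂ = 1) (hx12 : star x₁ ⬝ᵥ x₂ = 0)
    (hy11 : star y₁ ⬝ᵥ y₁ = 1) (hy22 : star y₂ ⬝ᵥ y₂ = 1) (hy12 : star y₁ ⬝ᵥ y₂ = 0) :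
    ∃ V : Matrix (Fin d) (Fin d) ℂ, Vᴴ * V = 1 ∧ V *ᵥ x₁ = y₁ ∧ V *ᵥ x₂ = y₂ := by
  have h0 : 0 < d := by omega
  have h1 : 1 < d := by omega
  set i0 : Fin d := ⟨0, h0⟩
  set i1 : Fin d := ⟨1, h1⟩
  have hne : i0 ≠ i1 := by simp [i0, i1, Fin.ext_iff]
  have key : ∀ x₁ x₂ : Fin d → ℂ, star x₁ ⬝ᵥ x₁ = 1 → star x₂ ⬝ᵥ x₂ = 1 →
      star x₁ ⬝ᵥ x₂ = 0 →
      ∃ b : OrthonormalBasis (Fin d) ℂ (EuclideanSpace ℂ (Fin d)),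
        b i0 = (WithLp.equiv 2 (Fin d → ℂ)).symm x₁ ∧
        b i1 = (WithLp.equiv 2 (Fin d → ℂ)).symm x₂ := by
    intro z₁ z₂ h11 h22 h12
    have h21 : star z₂ ⬝ᵥ z₁ = 0 := by
      have := congrArg star h12
      rwa [star_dotProduct, star_star, star_zero] at this
    set v : Fin d → EuclideanSpace ℂ (Fin d) :=
      fun i => if i = i0 then (WithLp.equiv 2 (Fin d → ℂ)).symm z₁
        else (WithLp.equiv 2 (Fin d → ℂ)).symm z₂ with hv
    have hvo : Orthonormal ℂ (({i0, i1} : Set (Fin d)).restrict v) := by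
      rw [orthonormal_iff_ite]
      rintro ⟨i, hi⟩ ⟨j, hj⟩
      simp only [Set.mem_insert_iff, Set.mem_singleton_iff] at hi hj
      rcases hi with rfl | rfl <;> rcases hj with rfl | rfl <;>
        simp [v, Set.restrict, hne, hne.symm, EuclideanSpace.inner_toLp_toLp,
          Subtype.ext_iff, -inner_self_eq_norm_sq_to_K] <;>
        first
          | simpa [dotProduct, mul_comm] using h11
          | simpa [dotProduct, mul_comm] using h22
          | simpa [dotProduct, mul_comm] using h12
          | simpa [dotProduct, mul_comm] using h21
    obtain ⟨b, hb⟩ := hvo.exists_orthonormalBasis_extension_of_card_eq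
      (by simp [finrank_euclideanSpace_fin])
    refine ⟨b, ?_, ?_⟩
    · rw [hb i0 (by simp)]; simp [v]
    · rw [hb i1 (by simp)]; simp [v, hne.symm, hne]
  obtain ⟨b, hb1, hb2⟩ := key x₁ x₂ hx11 hx22 hx12
  obtain ⟨b', hb'1, hb'2⟩ := key y₁ y₂ hy11 hy22 hy12
  set F : Matrix (Fin d) (Fin d) ℂ :=
    Matrix.of fun p i => (WithLp.equiv 2 (Fin d → ℂ)) (b i) p with hF
  set G : Matrix (Fin d) (Fin d) ℂ :=
    Matrix.of fun p i => (WithLp.equiv 2 (Fin d → ℂ)) (b' i) p with hG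
  have hFunit : Fᴴ * F = 1 := by
    ext i j
    have := (orthonormal_iff_ite.mp b.orthonormal) i j
    rw [EuclideanSpace.inner_eq_star_dotProduct, dotProduct_comm] at this
    simpa [Matrix.mul_apply, Matrix.conjTranspose_apply, F, dotProduct,
      Matrix.one_apply] using this
  have hGunit : Gᴴ * G = 1 := by
    ext i j
    have := (orthonormal_iff_ite.mp b'.orthonormal) i j
    rw [EuclideanSpace.inner_eq_star_dotProduct, dotProduct_comm] at this
    simpa [Matrix.mul_apply, Matrix.conjTranspose_apply, G, dotProduct,
      Matrix.one_apply] using this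
  refine ⟨G * Fᴴ, ?_, ?_, ?_⟩
  · calc (G * Fᴴ)ᴴ * (G * Fᴴ) = F * (Gᴴ * G) * Fᴴ := by
          simp [Matrix.conjTranspose_mul, Matrix.mul_assoc]
      _ = 1 := by rw [hGunit, Matrix.mul_one, mul_eq_one_comm.mp hFunit]
  · have hx : x₁ = F *ᵥ Pi.single i0 1 := by
      funext p
      simp only [Matrix.mulVec_single_one, Matrix.col_apply, F, Matrix.of_apply, mul_one]
      rw [hb1]; rfl
    rw [hx, Matrix.mulVec_mulVec]
    rw [show (G * Fᴴ) * F = G from by rw [Matrix.mul_assoc, hFunit, Matrix.mul_one]]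
    funext p
    simp only [Matrix.mulVec_single_one, Matrix.col_apply, G, Matrix.of_apply, mul_one]
    rw [hb'1]; rfl
  · have hx : x₂ = F *ᵥ Pi.single i1 1 := by
      funext p
      simp only [Matrix.mulVec_single_one, Matrix.col_apply, F, Matrix.of_apply, mul_one]
      rw [hb2]; rfl
    rw [hx, Matrix.mulVec_mulVec]
    rw [show (G * Fᴴ) * F = G from by rw [Matrix.mul_assoc, hFunit, Matrix.mul_one]]
    funext p
    simp only [Matrix.mulVec_single_one, Matrix.col_apply, G, Matrix.of_apply, mul_one]
    rw [hb'2]; rfl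

lemma entry_eq {d : ℕ} (A : Matrix (Fin d) (Fin d) ℂ) (ψ : Fin d → ℂ) (j : Fin d) :
    (A * Matrix.vecMulVec ψ (star ψ) * Aᴴ) j j
      = (A *ᵥ ψ) j * star ((A *ᵥ ψ) j) := by
  simp only [Matrix.mul_apply, Matrix.vecMulVec_apply, Matrix.conjTranspose_apply,
    Matrix.mulVec, dotProduct, Pi.star_apply, Finset.sum_mul, Finset.mul_sum,
    star_sum, star_mul']
  exact Finset.sum_congr rfl fun k _ => Finset.sum_congr rfl fun l _ => by ring

lemma hasDerivAt_phi {d : ℕ} (U S : ℝ → Matrix (Fin d) (Fin d) ℂ)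
    (V : Matrix (Fin d) (Fin d) ℂ) (θ₀ : ℝ)
    (U' S' : Matrix (Fin d) (Fin d) ℂ)
    (hU' : ∀ i j, HasDerivAt (fun θ => U θ i j) (U' i j) θ₀)
    (hS' : ∀ i j, HasDerivAt (fun θ => S θ i j) (S' i j) θ₀)
    (ψ : Fin d → ℂ) (j : Fin d) :
    HasDerivAt (fun θ => ((S θ * V * U θ) *ᵥ ψ) j)
      (((S' * V * U θ₀ + S θ₀ * V * U') *ᵥ ψ) j) θ₀ := by
  have hSV : ∀ m, HasDerivAt (fun θ => (S θ * V) j m) ((S' * V) j m) θ₀ := by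
    intro m
    have := HasDerivAt.fun_sum (fun n (_ : n ∈ Finset.univ) => (hS' j n).mul_const (V n m))
    simpa [Matrix.mul_apply] using this
  have hUψ : ∀ m, HasDerivAt (fun θ => (U θ *ᵥ ψ) m) ((U' *ᵥ ψ) m) θ₀ := by
    intro m
    have := HasDerivAt.fun_sum (fun k (_ : k ∈ Finset.univ) => (hU' m k).mul_const (ψ k))
    simpa [Matrix.mulVec, dotProduct] using this
  have key := HasDerivAt.fun_sum (fun m (_ : m ∈ Finset.univ) => (hSV m).mul (hUψ m))
  have h1 : (fun θ => ∑ m, (S θ * V) j m * (U θ *ᵥ ψ) m)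
      = (fun θ => ((S θ * V * U θ) *ᵥ ψ) j) := by
    funext θ
    rw [← Matrix.mulVec_mulVec]
    simp [Matrix.mulVec, dotProduct]
  have h2 : (∑ m, ((S' * V) j m * (U θ₀ *ᵥ ψ) m + (S θ₀ * V) j m * (U' *ᵥ ψ) m))
      = ((S' * V * U θ₀ + S θ₀ * V * U') *ᵥ ψ) j := by
    rw [Finset.sum_add_distrib]
    have e1 : ∑ m, (S' * V) j m * ((U θ₀ *ᵥ ψ) m) = ((S' * V) *ᵥ (U θ₀ *ᵥ ψ)) j := by
      simp [Matrix.mulVec, dotProduct]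
    have e2 : ∑ m, (S θ₀ * V) j m * ((U' *ᵥ ψ) m) = ((S θ₀ * V) *ᵥ (U' *ᵥ ψ)) j := by
      simp [Matrix.mulVec, dotProduct]
    rw [e1, e2, Matrix.mulVec_mulVec, Matrix.mulVec_mulVec, Matrix.add_mulVec]
    rfl
  rw [← h1, ← h2]
  exact key

lemma hasDerivAt_p {d : ℕ} (U S : ℝ → Matrix (Fin d) (Fin d) ℂ)
    (V : Matrix (Fin d) (Fin d) ℂ) (θ₀ : ℝ)
    (U' S' : Matrix (Fin d) (Fin d) ℂ)
    (hU' : ∀ i j, HasDerivAt (fun θ => U θ i j) (U' i j) θ₀)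
    (hS' : ∀ i j, HasDerivAt (fun θ => S θ i j) (S' i j) θ₀)
    (ψ : Fin d → ℂ) (j : Fin d) :
    HasDerivAt
      (fun θ => ((S θ * V * U θ * Matrix.vecMulVec ψ (star ψ)
            * (S θ * V * U θ)ᴴ) j j).re)
      ((((S' * V * U θ₀ + S θ₀ * V * U') *ᵥ ψ) j * star (((S θ₀ * V * U θ₀) *ᵥ ψ) j)
        + ((S θ₀ * V * U θ₀) *ᵥ ψ) j * star (((S' * V * U θ₀ + S θ₀ * V * U') *ᵥ ψ) j)).re)
      θ₀ := by
  have hφ := hasDerivAt_phi U S V θ₀ U' S' hU' hS' ψ j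
  have hmul : HasDerivAt (fun θ => ((S θ * V * U θ) *ᵥ ψ) j * star (((S θ * V * U θ) *ᵥ ψ) j))
      (((S' * V * U θ₀ + S θ₀ * V * U') *ᵥ ψ) j * star (((S θ₀ * V * U θ₀) *ᵥ ψ) j)
        + ((S θ₀ * V * U θ₀) *ᵥ ψ) j * star (((S' * V * U θ₀ + S θ₀ * V * U') *ᵥ ψ) j)) θ₀ :=
    hφ.mul hφ.star
  have key := Complex.reCLM.hasFDerivAt.comp_hasDerivAt θ₀ hmul
  have hfun : (fun θ => ((S θ * V * U θ * Matrix.vecMulVec ψ (star ψ)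
        * (S θ * V * U θ)ᴴ) j j).re)
      = (⇑Complex.reCLM ∘ fun θ => ((S θ * V * U θ) *ᵥ ψ) j
          * star (((S θ * V * U θ) *ᵥ ψ) j)) := by
    funext θ
    simp only [Function.comp_apply, entry_eq]
    rfl
  rw [hfun]
  exact key

lemma aux_p (c₂ : ℝ) (hc₂ : c₂ ^ 2 = 1 / 2) (A B : ℂ) :
    (((c₂ : ℂ) * (A + B)) * star ((c₂ : ℂ) * (A + B))).re
      = (Complex.normSq A + Complex.normSq B) / 2 + (star B * A).re := by
  simp only [Complex.star_def, _root_.map_mul, _root_.map_add, Complex.conj_ofReal]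
  simp only [Complex.mul_re, Complex.mul_im, Complex.add_re, Complex.add_im,
    Complex.ofReal_re, Complex.ofReal_im, Complex.conj_re, Complex.conj_im,
    Complex.normSq_apply]
  linear_combination ((A.re + B.re) ^ 2 + (A.im + B.im) ^ 2) * hc₂

lemma aux_pd (c₂ : ℝ) (hc₂ : c₂ ^ 2 = 1 / 2) (A B : ℂ) (μ ν : ℝ) :
    (((-Complex.I * ((c₂ : ℂ) * ((μ : ℂ) * A + (ν : ℂ) * B)))
        * star ((c₂ : ℂ) * (A + B)))
      + ((c₂ : ℂ) * (A + B))
        * star (-Complex.I * ((c₂ : ℂ) * ((μ : ℂ) * A + (ν : ℂ) * B)))).re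
      = (μ - ν) * (star B * A).im := by
  simp only [Complex.star_def, _root_.map_mul, _root_.map_add, map_neg,
    Complex.conj_ofReal, Complex.conj_I]
  simp only [Complex.add_re, Complex.mul_re, Complex.mul_im, Complex.add_im,
    Complex.neg_re, Complex.neg_im, Complex.I_re, Complex.I_im,
    Complex.ofReal_re, Complex.ofReal_im, Complex.conj_re, Complex.conj_im]
  linear_combination (2 * (μ - ν) * (B.re * A.im - B.im * A.re)) * hc₂

lemma core {d : ℕ} (wp wm : Fin d → ℂ) (c : ℂ) (μ ν : ℝ) (φ₀ φd : Fin d → ℂ)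
    (hφ₀ : ∀ j, φ₀ j = (((Real.sqrt 2)⁻¹ : ℝ) : ℂ) * (wp j + c * wm j))
    (hφd : ∀ j, φd j = -Complex.I * ((((Real.sqrt 2)⁻¹ : ℝ) : ℂ)
        * ((μ : ℂ) * wp j + (ν : ℂ) * (c * wm j))))
    (hcabs : ‖c‖ = 1)
    (hunit : ∑ j, Complex.normSq (wp j) = 1)
    (horth : ∑ j, (starRingEnd ℂ) (wm j) * (wp j) = 0)
    (hmod : ∀ j, ‖wp j‖ = ‖wm j‖)
    (hc : ∀ j, wp j + c * wm j = 0 → wp j = 0) :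
    ∑ j ∈ Finset.univ.filter (fun j => (φ₀ j * star (φ₀ j)).re ≠ 0),
      ((φd j * star (φ₀ j) + φ₀ j * star (φd j)).re) ^ 2 / (φ₀ j * star (φ₀ j)).re
      = (μ - ν) ^ 2 := by
  have hc₂ : ((Real.sqrt 2)⁻¹ : ℝ) ^ 2 = 1 / 2 := by
    rw [inv_pow, Real.sq_sqrt (by norm_num : (0:ℝ) ≤ 2)]
    norm_num
  have hnormB : ∀ j, Complex.normSq (c * wm j) = Complex.normSq (wp j) := by
    intro j
    rw [Complex.normSq_mul, ← Complex.sq_norm c, hcabs, ← Complex.sq_norm (wm j), ← hmod j,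
      Complex.sq_norm]
    ring
  have hp : ∀ j, (φ₀ j * star (φ₀ j)).re
      = Complex.normSq (wp j) + (star (c * wm j) * wp j).re := by
    intro j
    rw [hφ₀ j, aux_p _ hc₂, hnormB j]
    ring
  have hpd : ∀ j, (φd j * star (φ₀ j) + φ₀ j * star (φd j)).re
      = (μ - ν) * (star (c * wm j) * wp j).im := by
    intro j
    rw [hφ₀ j, hφd j]
    exact aux_pd _ hc₂ _ _ _ _
  have him : ∀ j, ((star (c * wm j) * wp j).im) ^ 2
      = (Complex.normSq (wp j) - (star (c * wm j) * wp j).re)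
        * (Complex.normSq (wp j) + (star (c * wm j) * wp j).re) := by
    intro j
    have h1 : Complex.normSq (star (c * wm j) * wp j) = Complex.normSq (wp j) ^ 2 := by
      rw [Complex.normSq_mul, Complex.star_def, Complex.normSq_conj, hnormB j]
      ring
    rw [Complex.normSq_apply] at h1
    nlinarith [h1]
  have hterm : ∀ j ∈ Finset.univ.filter (fun j => (φ₀ j * star (φ₀ j)).re ≠ 0),
      ((φd j * star (φ₀ j) + φ₀ j * star (φd j)).re) ^ 2 / (φ₀ j * star (φ₀ j)).re
      = (μ - ν) ^ 2 * (Complex.normSq (wp j) - (star (c * wm j) * wp j).re) := by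
    intro j hj
    rw [Finset.mem_filter] at hj
    have hpj : (φ₀ j * star (φ₀ j)).re ≠ 0 := hj.2
    rw [hpd j, hp j] at *
    rw [mul_pow, him j, mul_div_assoc, mul_div_cancel_right₀ _ hpj]
  rw [Finset.sum_congr rfl hterm, ← Finset.mul_sum]
  have hext : ∑ j ∈ Finset.univ.filter (fun j => (φ₀ j * star (φ₀ j)).re ≠ 0),
        (Complex.normSq (wp j) - (star (c * wm j) * wp j).re)
      = ∑ j, (Complex.normSq (wp j) - (star (c * wm j) * wp j).re) := by
    apply Finset.sum_subset (Finset.subset_univ _)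
    intro j _ hj
    simp only [Finset.mem_filter, Finset.mem_univ, true_and, not_not] at hj
    have h0 : φ₀ j = 0 := by
      have h00 : Complex.normSq (φ₀ j) = 0 := by
        have hmc := Complex.mul_conj (φ₀ j)
        rw [Complex.star_def] at hj
        rw [hmc] at hj
        simpa using hj
      exact Complex.normSq_eq_zero.mp h00
    have hAB : wp j + c * wm j = 0 := by
      rw [hφ₀ j] at h0
      rcases mul_eq_zero.mp h0 with h | h
      · exfalso
        have h2 : (Real.sqrt 2)⁻¹ = (0:ℝ) := by exact_mod_cast h
        have h3 : Real.sqrt 2 ≠ 0 := by positivity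
        simp [h3] at h2
      · exact h
    have hA : wp j = 0 := hc j hAB
    rw [hA]
    simp
  rw [hext]
  have hsum : ∑ j, (Complex.normSq (wp j) - (star (c * wm j) * wp j).re) = 1 := by
    rw [Finset.sum_sub_distrib, hunit]
    have hzsum : ∑ j, (star (c * wm j) * wp j) = 0 := by
      have hz : ∀ j, star (c * wm j) * wp j
          = star c * ((starRingEnd ℂ) (wm j) * wp j) := by
        intro j
        rw [star_mul', Complex.star_def]
        ring
      rw [Finset.sum_congr rfl fun j _ => hz j, ← Finset.mul_sum, horth, mul_zero]
    have hre : ∑ j, (star (c * wm j) * wp j).re = 0 := by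
      rw [← Complex.re_sum, hzsum, Complex.zero_re]
    rw [hre]
    ring
  rw [hsum, mul_one]

lemma star_dot_mulVec {d : ℕ} (M N : Matrix (Fin d) (Fin d) ℂ) (x y : Fin d → ℂ) :
    star (M *ᵥ x) ⬝ᵥ (N *ᵥ y) = star x ⬝ᵥ ((Mᴴ * N) *ᵥ y) := by
  simp [Matrix.star_mulVec, Matrix.dotProduct_mulVec, Matrix.vecMul_vecMul]

lemma dot_expand {d : ℕ} (a b : ℂ) (x y : Fin d → ℂ) :
    star (a • x + b • y) ⬝ᵥ (a • x + b • y)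
      = star a * a * (star x ⬝ᵥ x) + star a * b * (star x ⬝ᵥ y)
        + star b * a * (star y ⬝ᵥ x) + star b * b * (star y ⬝ᵥ y) := by
  simp only [star_add, star_smul, add_dotProduct, dotProduct_add,
    smul_dotProduct, dotProduct_smul, smul_eq_mul]
  ring

end Aux

/-- **Achievability of the controlled-energy-measurement bound.** If the extremal unit
eigenvectors `v₁, vd` of the Hermitian local generator `g[S] = i S′(θ₀)S(θ₀)†` have entrywise
equal complex moduli, then there exist a unitary control `V` and a pure initial preparation
`ψ₀` for which the Fisher information of the controlled energy measurement, with
`Ũ(θ) = S(θ)VU(θ)`, `ρ₀ = ψ₀ψ₀†` and `p_j(θ) = (Ũ(θ)ρ₀Ũ(θ)†)_{jj}`, equals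
`[σ(g[U]) + σ(g[S])]²`. -/
theorem controlled_energy_measurement_bound_achievable {d : ℕ} [NeZero d]
    (U S : ℝ → Matrix (Fin d) (Fin d) ℂ) (θ₀ : ℝ)
    (hUunit : ∀ θ, (U θ)ᴴ * U θ = 1)
    (hSunit : ∀ θ, (S θ)ᴴ * S θ = 1)
    (U' S' : Matrix (Fin d) (Fin d) ℂ)
    (hU' : ∀ i j, HasDerivAt (fun θ => U θ i j) (U' i j) θ₀)
    (hS' : ∀ i j, HasDerivAt (fun θ => S θ i j) (S' i j) θ₀)
    (hgU : (Complex.I • (U' * (U θ₀)ᴴ)).IsHermitian)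
    (hgS : (Complex.I • (S' * (S θ₀)ᴴ)).IsHermitian)
    (v₁ vd : Fin d → ℂ)
    (hv₁unit : star v₁ ⬝ᵥ v₁ = 1) (hvdunit : star vd ⬝ᵥ vd = 1)
    (hv₁ : (Complex.I • (S' * (S θ₀)ᴴ)) *ᵥ v₁
        = ((Finset.univ.sup' Finset.univ_nonempty hgS.eigenvalues : ℝ) : ℂ) • v₁)
    (hvd : (Complex.I • (S' * (S θ₀)ᴴ)) *ᵥ vd
        = ((Finset.univ.inf' Finset.univ_nonempty hgS.eigenvalues : ℝ) : ℂ) • vd)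
    (hmod : ∀ j, ‖v₁ j‖ = ‖vd j‖) :
    ∃ (V : Matrix (Fin d) (Fin d) ℂ) (ψ₀ : Fin d → ℂ) (p' : Fin d → ℝ),
      Vᴴ * V = 1 ∧ star ψ₀ ⬝ᵥ ψ₀ = 1 ∧
      (∀ j, HasDerivAt
          (fun θ => ((S θ * V * U θ * Matrix.vecMulVec ψ₀ (star ψ₀)
            * (S θ * V * U θ)ᴴ) j j).re) (p' j) θ₀) ∧
      ∑ j ∈ Finset.univ.filter
          (fun j => ((S θ₀ * V * U θ₀ * Matrix.vecMulVec ψ₀ (star ψ₀)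
            * (S θ₀ * V * U θ₀)ᴴ) j j).re ≠ 0),
        (p' j) ^ 2 / ((S θ₀ * V * U θ₀ * Matrix.vecMulVec ψ₀ (star ψ₀)
            * (S θ₀ * V * U θ₀)ᴴ) j j).re
      = (specGap (Complex.I • (U' * (U θ₀)ᴴ)) + specGap (Complex.I • (S' * (S θ₀)ᴴ))) ^ 2 := by
  classical
  by_cases hd2 : 2 ≤ d
  · -- main case : 2 ≤ d
    have hU0 : (U θ₀)ᴴ * U θ₀ = 1 := hUunit θ₀
    have hU0' : U θ₀ * (U θ₀)ᴴ = 1 := mul_eq_one_comm.mp hU0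
    have hS0 : (S θ₀)ᴴ * S θ₀ = 1 := hSunit θ₀
    have hS0' : S θ₀ * (S θ₀)ᴴ = 1 := mul_eq_one_comm.mp hS0
    have h0d : 0 < d := by omega
    have h1d : 1 < d := by omega
    set i0 : Fin d := ⟨0, h0d⟩
    set i1 : Fin d := ⟨1, h1d⟩
    have hne01 : i0 ≠ i1 := by simp [i0, i1, Fin.ext_iff]
    set a : ℝ := Finset.univ.sup' Finset.univ_nonempty hgS.eigenvalues with ha
    set b : ℝ := Finset.univ.inf' Finset.univ_nonempty hgS.eigenvalues with hb
    set lp : ℝ := Finset.univ.sup' Finset.univ_nonempty hgU.eigenvalues with hlp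
    set lm : ℝ := Finset.univ.inf' Finset.univ_nonempty hgU.eigenvalues with hlm
    have strip : ∀ (M : Matrix (Fin d) (Fin d) ℂ) (v : Fin d → ℂ) (r : ℝ),
        (Complex.I • M) *ᵥ v = (r : ℂ) • v → M *ᵥ v = (-Complex.I * (r : ℂ)) • v := by
      intro M v r h
      rw [Matrix.smul_mulVec] at h
      have h2 := congrArg (fun w => (-Complex.I) • w) h
      simp only [smul_smul, neg_mul, Complex.I_mul_I, neg_neg, one_smul] at h2
      rw [h2, neg_mul]
    set c₂ : ℂ := (((Real.sqrt 2)⁻¹ : ℝ) : ℂ) with hc₂def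
    have hc₂sq : c₂ * c₂ = (1/2 : ℂ) := by
      rw [hc₂def, ← Complex.ofReal_mul, ← mul_inv, Real.mul_self_sqrt (by norm_num : (0:ℝ) ≤ 2)]
      norm_num
    have hc₂star : star c₂ = c₂ := by rw [hc₂def, Complex.star_def, Complex.conj_ofReal]
    have hc₂ne : c₂ ≠ 0 := by
      rw [hc₂def]
      simp only [ne_eq, Complex.ofReal_eq_zero, inv_eq_zero]
      positivity
    -- package of extremal eigenvectors of gS with matched moduli
    obtain ⟨wp, wm, c, hcabs, hwpu, hwmu, hworth, hwpe, hwme, hwmod, hwc⟩ :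
        ∃ (wp wm : Fin d → ℂ) (c : ℂ), ‖c‖ = 1 ∧
          star wp ⬝ᵥ wp = 1 ∧ star wm ⬝ᵥ wm = 1 ∧ star wm ⬝ᵥ wp = 0 ∧
          (S' * (S θ₀)ᴴ) *ᵥ wp = (-Complex.I * (a : ℂ)) • wp ∧
          (S' * (S θ₀)ᴴ) *ᵥ wm = (-Complex.I * (b : ℂ)) • wm ∧
          (∀ j, ‖wp j‖ = ‖wm j‖) ∧
          (∀ j, wp j + c * wm j = 0 → wp j = 0) := by
      by_cases hab : a = b
      · -- gS is a scalar matrix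
        have hall : ∀ k, hgS.eigenvalues k = a := by
          intro k
          refine le_antisymm (Finset.le_sup' _ (Finset.mem_univ k)) ?_
          rw [hab]
          exact Finset.inf'_le _ (Finset.mem_univ k)
        have hscal : Complex.I • (S' * (S θ₀)ᴴ) = (a : ℂ) • (1 : Matrix (Fin d) (Fin d) ℂ) := by
          have hsp := hgS.spectral_theorem
          have hdiag : Matrix.diagonal (RCLike.ofReal ∘ hgS.eigenvalues)
              = (a : ℂ) • (1 : Matrix (Fin d) (Fin d) ℂ) := by
            have hfun : (RCLike.ofReal ∘ hgS.eigenvalues : Fin d → ℂ) = fun _ => (a : ℂ) := by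
              funext k
              simp [Function.comp, hall k, RCLike.ofReal]
            rw [hfun, show (fun _ : Fin d => (a:ℂ)) = (a:ℂ) • (fun _ : Fin d => (1:ℂ)) by
              funext k; simp, Matrix.diagonal_smul, Matrix.diagonal_one]
          rw [hdiag] at hsp
          rw [hsp, Unitary.conjStarAlgAut_apply, Matrix.mul_smul, Matrix.mul_one, Matrix.smul_mul,
            (Matrix.mem_unitaryGroup_iff).mp (hgS.eigenvectorUnitary).2]
        have hSprime : S' * (S θ₀)ᴴ = (-Complex.I * (a : ℂ)) • (1 : Matrix (Fin d) (Fin d) ℂ) := by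
          have h2 := congrArg (fun M : Matrix (Fin d) (Fin d) ℂ => (-Complex.I) • M) hscal
          simp only [smul_smul, neg_mul, Complex.I_mul_I, neg_neg, one_smul] at h2
          rw [h2, neg_mul]
        have heig : ∀ w : Fin d → ℂ, (S' * (S θ₀)ᴴ) *ᵥ w = (-Complex.I * (a : ℂ)) • w := by
          intro w
          rw [hSprime, Matrix.smul_mulVec, Matrix.one_mulVec]
        set wp : Fin d → ℂ := fun j => if j = i0 then c₂ else if j = i1 then c₂ else 0 with hwp
        set wm : Fin d → ℂ := fun j => if j = i0 then c₂ else if j = i1 then -c₂ else 0 with hwm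
        have hite : ∀ (x y : ℂ), (∑ j, if j = i0 then x else if j = i1 then y else 0) = x + y := by
          intro x y
          have hsplit : ∀ j : Fin d, (if j = i0 then x else if j = i1 then y else 0)
              = (if j = i0 then x else 0) + (if j = i1 then y else 0) := by
            intro j
            by_cases h0 : j = i0
            · subst h0; simp [hne01]
            · by_cases h1 : j = i1 <;> simp [h0, h1, Ne.symm hne01]
          rw [Finset.sum_congr rfl fun j _ => hsplit j, Finset.sum_add_distrib,
            Finset.sum_ite_eq' Finset.univ i0 (fun _ => x),
            Finset.sum_ite_eq' Finset.univ i1 (fun _ => y)]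
          simp
        refine ⟨wp, wm, Complex.I, by simp, ?_, ?_, ?_, heig wp, by rw [← hab]; exact heig wm,
          ?_, ?_⟩
        · have : star wp ⬝ᵥ wp
              = ∑ j, (if j = i0 then star c₂ * c₂ else if j = i1 then star c₂ * c₂ else 0) := by
            refine Finset.sum_congr rfl fun j _ => ?_
            by_cases h0 : j = i0
            · subst h0; simp [wp]
            · by_cases h1 : j = i1 <;> simp [wp, h0, h1]
          rw [this, hite]
          simp only [hc₂star, hc₂sq]
          norm_num
        · have : star wm ⬝ᵥ wm
              = ∑ j, (if j = i0 then star c₂ * c₂ else if j = i1 then star c₂ * c₂ else 0) := by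
            refine Finset.sum_congr rfl fun j _ => ?_
            by_cases h0 : j = i0
            · subst h0; simp [wm]
            · by_cases h1 : j = i1
              · subst h1; simp [wm, h0]; try ring
              · simp [wm, h0, h1]
          rw [this, hite]
          simp only [hc₂star, hc₂sq]
          norm_num
        · have : star wm ⬝ᵥ wp
              = ∑ j, (if j = i0 then star c₂ * c₂ else if j = i1 then -(star c₂ * c₂) else 0) := by
            refine Finset.sum_congr rfl fun j _ => ?_
            by_cases h0 : j = i0
            · subst h0; simp [wm, wp]
            · by_cases h1 : j = i1
              · subst h1; simp [wm, wp, h0]; try ring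
              · simp [wm, wp, h0, h1]
          rw [this, hite]
          ring
        · intro j
          by_cases h0 : j = i0
          · subst h0; simp [wp, wm]
          · by_cases h1 : j = i1 <;> simp [wp, wm, h0, h1, Ne.symm hne01, map_neg]
        · intro j hj
          by_cases h0 : j = i0
          · subst h0
            simp only [wp, wm, if_pos rfl] at hj ⊢
            exfalso
            apply hc₂ne
            have : c₂ * (1 + Complex.I) = 0 := by rw [mul_add, mul_one, mul_comm]; linear_combination hj
            rcases mul_eq_zero.mp this with h | h
            · exact h
            · exfalso
              have := congrArg Complex.re h
              simp at this
          · by_cases h1 : j = i1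
            · subst h1
              exfalso
              have hre := congrArg Complex.re hj
              have h2 : Real.sqrt 2 ≠ 0 := by positivity
              simp [wp, wm, h0, hc₂def, Complex.mul_re, Complex.add_re, h2] at hre
            · simp [wp, h0, h1]
      · -- distinct extremal eigenvalues : use v₁ and vd
        have horth : star vd ⬝ᵥ v₁ = 0 := by
          have h1 : star vd ⬝ᵥ ((Complex.I • (S' * (S θ₀)ᴴ)) *ᵥ v₁)
              = (a : ℂ) * (star vd ⬝ᵥ v₁) := by
            rw [hv₁, dotProduct_smul, smul_eq_mul]
          have h2 : star vd ⬝ᵥ ((Complex.I • (S' * (S θ₀)ᴴ)) *ᵥ v₁)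
              = (b : ℂ) * (star vd ⬝ᵥ v₁) := by
            calc star vd ⬝ᵥ ((Complex.I • (S' * (S θ₀)ᴴ)) *ᵥ v₁)
                = star ((Complex.I • (S' * (S θ₀)ᴴ)) *ᵥ vd) ⬝ᵥ v₁ := by
                  rw [Matrix.dotProduct_mulVec, Matrix.star_mulVec, hgS.eq]
              _ = (b : ℂ) * (star vd ⬝ᵥ v₁) := by
                  rw [hvd, star_smul, smul_dotProduct]
                  simp [Complex.star_def, Complex.conj_ofReal, smul_eq_mul]
          have h3 : ((a : ℂ) - (b : ℂ)) * (star vd ⬝ᵥ v₁) = 0 := by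
            rw [sub_mul, ← h1, ← h2, sub_self]
          rcases mul_eq_zero.mp h3 with h | h
          · exfalso
            apply hab
            have : (a : ℂ) = (b : ℂ) := by linear_combination h
            exact_mod_cast this
          · exact h
        obtain ⟨c, hc1, hc2⟩ := exists_unit_avoid (Finset.univ.image fun j => -(v₁ j / vd j))
        refine ⟨v₁, vd, c, hc1, hv₁unit, hvdunit, horth, strip _ _ _ hv₁, strip _ _ _ hvd,
          hmod, ?_⟩
        intro j hj
        by_cases hvdj : vd j = 0
        · rw [hvdj, mul_zero, add_zero] at hj
          exact hj
        · exfalso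
          apply hc2
          rw [Finset.mem_image]
          refine ⟨j, Finset.mem_univ j, ?_⟩
          field_simp
          linear_combination -hj
    -- eigenvector pair for gU
    have hob : ∀ i j : Fin d, star ⇑(hgU.eigenvectorBasis i) ⬝ᵥ ⇑(hgU.eigenvectorBasis j)
        = if i = j then 1 else 0 := by
      intro i j
      have := orthonormal_iff_ite.mp hgU.eigenvectorBasis.orthonormal i j
      rwa [EuclideanSpace.inner_eq_star_dotProduct, dotProduct_comm] at this
    have heigU : ∀ (i : Fin d) (l : ℝ), hgU.eigenvalues i = l →
        (U' * (U θ₀)ᴴ) *ᵥ ⇑(hgU.eigenvectorBasis i)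
          = (-Complex.I * (l : ℂ)) • ⇑(hgU.eigenvectorBasis i) := by
      intro i l hl
      apply strip
      have h := hgU.mulVec_eigenvectorBasis i
      rw [hl] at h
      rw [h]
      funext k
      simp [Complex.real_smul]
    obtain ⟨ip, im, hipim, hip, him⟩ : ∃ ip im : Fin d, ip ≠ im ∧
        hgU.eigenvalues ip = lp ∧ hgU.eigenvalues im = lm := by
      obtain ⟨i, -, hi⟩ := Finset.exists_mem_eq_sup' Finset.univ_nonempty hgU.eigenvalues
      obtain ⟨j, -, hj⟩ := Finset.exists_mem_eq_inf' Finset.univ_nonempty hgU.eigenvalues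
      by_cases hij : i = j
      · have hlplm : lp = lm := by rw [hlp, hlm, hi, hj, hij]
        have hallU : ∀ k, hgU.eigenvalues k = lp := by
          intro k
          refine le_antisymm (Finset.le_sup' _ (Finset.mem_univ k)) ?_
          rw [hlplm]
          exact Finset.inf'_le _ (Finset.mem_univ k)
        exact ⟨i0, i1, hne01, hallU i0, by rw [hallU i1, hlplm]⟩
      · exact ⟨i, j, hij, hi.symm, hj.symm⟩
    set up : Fin d → ℂ := ⇑(hgU.eigenvectorBasis ip) with hupdef
    set um : Fin d → ℂ := ⇑(hgU.eigenvectorBasis im) with humdef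
    have hup : (U' * (U θ₀)ᴴ) *ᵥ up = (-Complex.I * (lp : ℂ)) • up := heigU ip lp hip
    have hum : (U' * (U θ₀)ᴴ) *ᵥ um = (-Complex.I * (lm : ℂ)) • um := heigU im lm him
    have hupu : star up ⬝ᵥ up = 1 := by simpa using hob ip ip
    have humu : star um ⬝ᵥ um = 1 := by simpa using hob im im
    have hupum : star up ⬝ᵥ um = 0 := by simpa [hipim] using hob ip im
    have humup : star um ⬝ᵥ up = 0 := by simpa [hipim.symm] using hob im ip
    have hworth' : star wp ⬝ᵥ wm = 0 := by
      have := congrArg star hworth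
      rwa [star_dotProduct, star_star, star_zero] at this
    have hy11 : star ((S θ₀)ᴴ *ᵥ wp) ⬝ᵥ ((S θ₀)ᴴ *ᵥ wp) = 1 := by
      rw [star_dot_mulVec, Matrix.conjTranspose_conjTranspose, hS0', Matrix.one_mulVec]
      exact hwpu
    have hy22 : star ((S θ₀)ᴴ *ᵥ wm) ⬝ᵥ ((S θ₀)ᴴ *ᵥ wm) = 1 := by
      rw [star_dot_mulVec, Matrix.conjTranspose_conjTranspose, hS0', Matrix.one_mulVec]
      exact hwmu
    have hy12 : star ((S θ₀)ᴴ *ᵥ wp) ⬝ᵥ ((S θ₀)ᴴ *ᵥ wm) = 0 := by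
      rw [star_dot_mulVec, Matrix.conjTranspose_conjTranspose, hS0', Matrix.one_mulVec]
      exact hworth'
    obtain ⟨V, hVunit, hV1, hV2⟩ := exists_unitary_pair hd2 up um
      ((S θ₀)ᴴ *ᵥ wp) ((S θ₀)ᴴ *ᵥ wm) hupu humu hupum hy11 hy22 hy12
    set χ : Fin d → ℂ := c₂ • up + (c₂ * c) • um with hχdef
    set ψ : Fin d → ℂ := (U θ₀)ᴴ *ᵥ χ with hψdef
    have hnormc : star c * c = 1 := by
      rw [Complex.star_def, mul_comm, Complex.mul_conj, Complex.normSq_eq_norm_sq, hcabs]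
      norm_num
    have hψunit : star ψ ⬝ᵥ ψ = 1 := by
      rw [hψdef, star_dot_mulVec, Matrix.conjTranspose_conjTranspose, hU0', Matrix.one_mulVec,
        hχdef, dot_expand, hupu, humu, hupum, humup]
      simp only [mul_zero, mul_one, add_zero, zero_add]
      rw [star_mul', hc₂star]
      linear_combination (1 + star c * c) * hc₂sq + (1/2 : ℂ) * hnormc
    have hφ0vec : (S θ₀ * V * U θ₀) *ᵥ ψ = c₂ • wp + (c₂ * c) • wm := by
      calc (S θ₀ * V * U θ₀) *ᵥ ψ
          = ((S θ₀ * V) * (U θ₀ * (U θ₀)ᴴ)) *ᵥ χ := by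
            rw [hψdef, Matrix.mulVec_mulVec, Matrix.mul_assoc (S θ₀ * V) (U θ₀) ((U θ₀)ᴴ)]
        _ = (S θ₀ * V) *ᵥ χ := by rw [hU0', Matrix.mul_one]
        _ = S θ₀ *ᵥ (V *ᵥ χ) := by rw [← Matrix.mulVec_mulVec]
        _ = S θ₀ *ᵥ (c₂ • ((S θ₀)ᴴ *ᵥ wp) + (c₂ * c) • ((S θ₀)ᴴ *ᵥ wm)) := by
            rw [hχdef, Matrix.mulVec_add, Matrix.mulVec_smul, Matrix.mulVec_smul, hV1, hV2]
        _ = c₂ • ((S θ₀ * (S θ₀)ᴴ) *ᵥ wp) + (c₂ * c) • ((S θ₀ * (S θ₀)ᴴ) *ᵥ wm) := by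
            rw [Matrix.mulVec_add, Matrix.mulVec_smul, Matrix.mulVec_smul,
              Matrix.mulVec_mulVec, Matrix.mulVec_mulVec]
        _ = c₂ • wp + (c₂ * c) • wm := by rw [hS0', Matrix.one_mulVec, Matrix.one_mulVec]
    have hT1 : (S' * V * U θ₀) *ᵥ ψ
        = (c₂ * (-Complex.I * (a : ℂ))) • wp + ((c₂ * c) * (-Complex.I * (b : ℂ))) • wm := by
      calc (S' * V * U θ₀) *ᵥ ψ
          = ((S' * V) * (U θ₀ * (U θ₀)ᴴ)) *ᵥ χ := by
            rw [hψdef, Matrix.mulVec_mulVec, Matrix.mul_assoc (S' * V) (U θ₀) ((U θ₀)ᴴ)]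
        _ = S' *ᵥ (V *ᵥ χ) := by rw [hU0', Matrix.mul_one, ← Matrix.mulVec_mulVec]
        _ = S' *ᵥ (c₂ • ((S θ₀)ᴴ *ᵥ wp) + (c₂ * c) • ((S θ₀)ᴴ *ᵥ wm)) := by
            rw [hχdef, Matrix.mulVec_add, Matrix.mulVec_smul, Matrix.mulVec_smul, hV1, hV2]
        _ = c₂ • ((S' * (S θ₀)ᴴ) *ᵥ wp) + (c₂ * c) • ((S' * (S θ₀)ᴴ) *ᵥ wm) := by
            rw [Matrix.mulVec_add, Matrix.mulVec_smul, Matrix.mulVec_smul,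
              Matrix.mulVec_mulVec, Matrix.mulVec_mulVec]
        _ = (c₂ * (-Complex.I * (a : ℂ))) • wp + ((c₂ * c) * (-Complex.I * (b : ℂ))) • wm := by
            rw [hwpe, hwme, smul_smul, smul_smul]
    have hT2 : (S θ₀ * V * U') *ᵥ ψ
        = (c₂ * (-Complex.I * (lp : ℂ))) • wp + ((c₂ * c) * (-Complex.I * (lm : ℂ))) • wm := by
      calc (S θ₀ * V * U') *ᵥ ψ
          = ((S θ₀ * V) * (U' * (U θ₀)ᴴ)) *ᵥ χ := by
            rw [hψdef, Matrix.mulVec_mulVec, Matrix.mul_assoc (S θ₀ * V) U' ((U θ₀)ᴴ)]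
        _ = (S θ₀ * V) *ᵥ ((U' * (U θ₀)ᴴ) *ᵥ χ) := by rw [← Matrix.mulVec_mulVec]
        _ = (S θ₀ * V) *ᵥ (c₂ • ((-Complex.I * (lp : ℂ)) • up)
              + (c₂ * c) • ((-Complex.I * (lm : ℂ)) • um)) := by
            rw [hχdef, Matrix.mulVec_add, Matrix.mulVec_smul, Matrix.mulVec_smul, hup, hum]
        _ = (c₂ * (-Complex.I * (lp : ℂ))) • ((S θ₀ * V) *ᵥ up)
              + ((c₂ * c) * (-Complex.I * (lm : ℂ))) • ((S θ₀ * V) *ᵥ um) := by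
            rw [Matrix.mulVec_add, Matrix.mulVec_smul, Matrix.mulVec_smul,
              Matrix.mulVec_smul, Matrix.mulVec_smul, smul_smul, smul_smul]
        _ = (c₂ * (-Complex.I * (lp : ℂ))) • wp + ((c₂ * c) * (-Complex.I * (lm : ℂ))) • wm := by
            rw [← Matrix.mulVec_mulVec, hV1, Matrix.mulVec_mulVec, hS0', Matrix.one_mulVec,
              ← Matrix.mulVec_mulVec, hV2, Matrix.mulVec_mulVec, hS0', Matrix.one_mulVec]
    have hφ0 : ∀ j, ((S θ₀ * V * U θ₀) *ᵥ ψ) j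
        = (((Real.sqrt 2)⁻¹ : ℝ) : ℂ) * (wp j + c * wm j) := by
      intro j
      rw [hφ0vec]
      simp only [Pi.add_apply, Pi.smul_apply, smul_eq_mul]
      rw [hc₂def]
      ring
    have hφd : ∀ j, ((S' * V * U θ₀ + S θ₀ * V * U') *ᵥ ψ) j
        = -Complex.I * ((((Real.sqrt 2)⁻¹ : ℝ) : ℂ)
            * ((((lp + a : ℝ)) : ℂ) * wp j + (((lm + b : ℝ)) : ℂ) * (c * wm j))) := by
      intro j
      rw [Matrix.add_mulVec]
      simp only [Pi.add_apply]
      rw [hT1, hT2]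
      simp only [Pi.add_apply, Pi.smul_apply, smul_eq_mul]
      rw [hc₂def]
      push_cast
      ring
    have hunit' : ∑ j, Complex.normSq (wp j) = 1 := by
      have h1 : ∑ j, (Complex.normSq (wp j) : ℂ) = 1 := by
        have h2 : ∀ j, (Complex.normSq (wp j) : ℂ) = (starRingEnd ℂ) (wp j) * wp j := by
          intro j; rw [mul_comm, Complex.mul_conj]
        rw [Finset.sum_congr rfl fun j _ => h2 j]
        simpa [dotProduct] using hwpu
      exact_mod_cast h1
    have horth'' : ∑ j, (starRingEnd ℂ) (wm j) * wp j = 0 := by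
      simpa [dotProduct] using hworth
    refine ⟨V, ψ, fun j => ((((S' * V * U θ₀ + S θ₀ * V * U') *ᵥ ψ) j
        * star (((S θ₀ * V * U θ₀) *ᵥ ψ) j)
        + ((S θ₀ * V * U θ₀) *ᵥ ψ) j
        * star (((S' * V * U θ₀ + S θ₀ * V * U') *ᵥ ψ) j)).re),
      hVunit, hψunit, fun j => hasDerivAt_p U S V θ₀ U' S' hU' hS' ψ j, ?_⟩
    have hcore := core wp wm c (lp + a) (lm + b)
      ((S θ₀ * V * U θ₀) *ᵥ ψ) ((S' * V * U θ₀ + S θ₀ * V * U') *ᵥ ψ)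
      hφ0 hφd hcabs hunit' horth'' hwmod hwc
    have hsgU : specGap (Complex.I • (U' * (U θ₀)ᴴ)) = lp - lm := by
      unfold specGap
      rw [dif_pos hgU]
    have hsgS : specGap (Complex.I • (S' * (S θ₀)ᴴ)) = a - b := by
      unfold specGap
      rw [dif_pos hgS]
    rw [hsgU, hsgS, show (lp - lm) + (a - b) = (lp + a) - (lm + b) by ring]
    simp only [entry_eq]
    exact hcore
  · -- d = 1
    have hd1 : d = 1 := by have := Nat.pos_of_ne_zero (NeZero.ne d); omega
    subst hd1
    have hspec : ∀ (M : Matrix (Fin 1) (Fin 1) ℂ), specGap M = 0 := by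
      intro M
      rw [specGap]
      split
      · next h =>
        have hs : Finset.univ.sup' Finset.univ_nonempty h.eigenvalues = h.eigenvalues 0 :=
          le_antisymm (Finset.sup'_le _ _ fun i _ => le_of_eq (by rw [Subsingleton.elim i 0]))
            (Finset.le_sup' _ (Finset.mem_univ 0))
        have hi : Finset.univ.inf' Finset.univ_nonempty h.eigenvalues = h.eigenvalues 0 :=
          le_antisymm (Finset.inf'_le _ (Finset.mem_univ 0))
            (Finset.le_inf' _ _ fun i _ => ge_of_eq (by rw [Subsingleton.elim i 0]))
        rw [hs, hi, sub_self]
      · rfl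
    set ψ : Fin 1 → ℂ := fun _ => 1 with hψdef
    refine ⟨1, ψ, fun _ => 0, by simp, by simp [ψ, dotProduct], ?_, ?_⟩
    · intro j
      have hj : j = 0 := Subsingleton.elim j 0
      subst hj
      have hnorm1 : ∀ (M : Matrix (Fin 1) (Fin 1) ℂ), Mᴴ * M = 1 → M 0 0 * star (M 0 0) = 1 := by
        intro M hM
        have h := congrFun (congrFun hM 0) 0
        simp only [Matrix.mul_apply, Matrix.conjTranspose_apply, Matrix.one_apply_eq,
          Fin.sum_univ_one] at h
        rw [mul_comm] at h
        simpa [Complex.star_def] using h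
      have hconst : (fun θ => ((S θ * (1 : Matrix (Fin 1) (Fin 1) ℂ) * U θ
          * Matrix.vecMulVec ψ (star ψ)
          * (S θ * (1 : Matrix (Fin 1) (Fin 1) ℂ) * U θ)ᴴ) 0 0).re) = fun _ => (1:ℝ) := by
        funext θ
        rw [entry_eq]
        have hφ : ((S θ * (1 : Matrix (Fin 1) (Fin 1) ℂ) * U θ) *ᵥ ψ) 0 = S θ 0 0 * U θ 0 0 := by
          simp [ψ, Matrix.mulVec, dotProduct, Fin.sum_univ_one, Matrix.mul_apply]
        rw [hφ]
        have hU1 := hnorm1 (U θ) (hUunit θ)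
        have hS1 := hnorm1 (S θ) (hSunit θ)
        have : S θ 0 0 * U θ 0 0 * star (S θ 0 0 * U θ 0 0)
            = (S θ 0 0 * star (S θ 0 0)) * (U θ 0 0 * star (U θ 0 0)) := by
          rw [star_mul']
          ring
        rw [this, hU1, hS1]
        norm_num
      rw [hconst]
      exact hasDerivAt_const θ₀ 1
    · rw [hspec, hspec]
      rw [Finset.sum_eq_zero]
      · norm_num
      · intro j _
        norm_num
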